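/- Fix r ≥ 0 and m ≥ 1, and let f₀ : ℕ → ℚ be the sequence f₀(j) = C(j + r, r + 1) for j ≥ 1. Then for every n ≥ 1, the m-th invert transform of f₀ satisfies (𝒴^m f₀)(n) = Σ_{k=1}^{n} C(n + (r+1)k − 1, n − k) · m^(k−1). (For n > 1 this number counts the words of length n − 1 over the alphabet {0, 1, …, m+r+1} avoiding every two-letter pattern a₁a₂ with a₁ < a₂ and a₁, a₂ ∈ {0, …, r+1}.) -/

import Mathlib

/-- The invert transform of a sequence `x : ℕ → ℚ` (indexed from 1, `x 0` ignored):
`(𝒴x)(0) = 0` and `(𝒴x)(n) = x n + ∑_{j=1}^{n-1} x j * (𝒴x)(n-j)` for `n ≥ 1`. -/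
def invert (x : ℕ → ℚ) : ℕ → ℚ
  | 0 => 0
  | n + 1 => x (n + 1) + ∑ j ∈ Finset.range n, x (j + 1) * invert x (n - j)
  termination_by n => n
  decreasing_by omega

/-- The partial Bell polynomial `B_{n,k}(z₁, z₂, …)`, evaluated at a sequence of rationals
`z` (indexed from 1, `z 0` ignored): the sum over all finitely supported `α : ℕ → ℕ` with
`α 0 = 0`, `∑ i, α i = k` and `∑ i, i * α i = n` of `(n! / ∏ i, (α i)!) * ∏ i (z i / i!)^(α i)`. -/
def partialBell (n k : ℕ) (z : ℕ → ℚ) : ℚ :=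
  ∑ α ∈ ((Finset.range (n + 1)).finsuppAntidiag k).filter
      (fun α => (∑ i ∈ Finset.range (n + 1), i * α i) = n ∧ α 0 = 0),
    ((n.factorial : ℚ) / ∏ i ∈ Finset.range (n + 1), ((α i).factorial : ℚ)) *
      ∏ i ∈ Finset.range (n + 1), (z i / (i.factorial : ℚ)) ^ α i

open PowerSeries Finset

private lemma invert_zero (x : ℕ → ℚ) : invert x 0 = 0 := by rw [invert]

private lemma invert_congr {x y : ℕ → ℚ} (h : ∀ j, 1 ≤ j → x j = y j) :
    invert x = invert y := by
  funext n
  induction n using Nat.strong_induction_on with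
  | _ n ih =>
    match n with
    | 0 => rw [invert_zero, invert_zero]
    | Nat.succ n =>
      conv_lhs => rw [invert]
      conv_rhs => rw [invert]
      rw [h (n+1) (by omega)]
      congr 1
      refine Finset.sum_congr rfl fun j hj => ?_
      have hj' := Finset.mem_range.mp hj
      rw [h (j+1) (by omega), ih (n - j) (by omega)]

private lemma mk_invert_eq (x : ℕ → ℚ) (hx0 : x 0 = 0) :
    PowerSeries.mk (invert x)
      = PowerSeries.mk x + PowerSeries.mk x * PowerSeries.mk (invert x) := by
  ext n
  rw [map_add, coeff_mk, coeff_mk, coeff_mul]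
  cases n with
  | zero =>
    simp [invert_zero, hx0]
  | succ n =>
    rw [Finset.Nat.sum_antidiagonal_eq_sum_range_succ_mk]
    simp only [coeff_mk]
    rw [Finset.sum_range_succ, Finset.sum_range_succ']
    conv_lhs => rw [invert]
    simp only [Nat.succ_sub_succ, invert_zero, hx0, Nat.sub_self, mul_zero, zero_mul,
      add_zero, zero_add]

/-- `F = t/(1-t)^{r+2}`. -/
private noncomputable def Fps (r : ℕ) : PowerSeries ℚ :=
  PowerSeries.X * (PowerSeries.invOneSubPow ℚ (r + 2)).val

private def fseq (r : ℕ) : ℕ → ℚ := fun j => if j = 0 then 0 else ((j + r).choose (r + 1) : ℚ)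

private lemma fseq_zero (r : ℕ) : fseq r 0 = 0 := rfl

private lemma mk_fseq (r : ℕ) : PowerSeries.mk (fseq r) = Fps r := by
  ext n
  rw [coeff_mk, Fps]
  cases n with
  | zero =>
    simp [fseq, coeff_zero_eq_constantCoeff]
  | succ n =>
    rw [PowerSeries.coeff_succ_X_mul, invOneSubPow_val_succ_eq_mk_add_choose, coeff_mk]
    simp only [fseq, Nat.succ_ne_zero, if_false]
    congr 2
    omega

private lemma iter_zero (r m : ℕ) : invert^[m] (fseq r) 0 = 0 := by
  cases m with
  | zero => rfl
  | succ m => rw [Function.iterate_succ_apply', invert_zero]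

private lemma key (r : ℕ) : ∀ m : ℕ,
    PowerSeries.mk (invert^[m] (fseq r)) * (1 - (m : PowerSeries ℚ) * Fps r) = Fps r := by
  intro m
  induction m with
  | zero => simp [mk_fseq]
  | succ m ih =>
    have h1 := mk_invert_eq (invert^[m] (fseq r)) (iter_zero r m)
    rw [Function.iterate_succ_apply']
    push_cast
    set G := PowerSeries.mk (invert^[m] (fseq r))
    set G' := PowerSeries.mk (invert (invert^[m] (fseq r)))
    linear_combination (1 - (m : PowerSeries ℚ) * Fps r) * h1 + (1 + G') * ih

private lemma Fpow (r k : ℕ) :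
    Fps r ^ k
      = PowerSeries.X ^ k * ((PowerSeries.invOneSubPow ℚ ((r + 2) * k)).val) := by
  rcases Nat.eq_zero_or_pos k with rfl | hk
  · simp [invOneSubPow_zero]
  rw [Fps, mul_pow]
  congr 1
  have h1 : ((PowerSeries.invOneSubPow ℚ (r + 2)).val) ^ k
      * ((1 - PowerSeries.X : PowerSeries ℚ)) ^ ((r + 2) * k) = 1 := by
    rw [show (((1 - PowerSeries.X : PowerSeries ℚ)) ^ ((r + 2) * k))
        = (((1 - PowerSeries.X : PowerSeries ℚ)) ^ (r + 2)) ^ k from by rw [← pow_mul],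
      ← mul_pow, ← invOneSubPow_inv_eq_one_sub_pow, Units.val_inv, one_pow]
  have h2 : ((PowerSeries.invOneSubPow ℚ ((r + 2) * k)).val)
      * ((1 - PowerSeries.X : PowerSeries ℚ)) ^ ((r + 2) * k) = 1 := by
    rw [← invOneSubPow_inv_eq_one_sub_pow, Units.val_inv]
  calc ((PowerSeries.invOneSubPow ℚ (r + 2)).val) ^ k
      = ((PowerSeries.invOneSubPow ℚ (r + 2)).val) ^ k
        * (((PowerSeries.invOneSubPow ℚ ((r + 2) * k)).val)
          * ((1 - PowerSeries.X : PowerSeries ℚ)) ^ ((r + 2) * k)) := by rw [h2, mul_one]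
    _ = ((PowerSeries.invOneSubPow ℚ ((r + 2) * k)).val)
        * (((PowerSeries.invOneSubPow ℚ (r + 2)).val) ^ k
          * ((1 - PowerSeries.X : PowerSeries ℚ)) ^ ((r + 2) * k)) := by ring
    _ = _ := by rw [h1, mul_one]

private lemma coeff_Fpow (r k n : ℕ) (hk : 1 ≤ k) (hkn : k ≤ n) :
    PowerSeries.coeff n (Fps r ^ k)
      = ((n + (r + 1) * k - 1).choose (n - k) : ℚ) := by
  obtain ⟨d, rfl⟩ : ∃ d, n = d + k := ⟨n - k, by omega⟩
  rw [Fpow, PowerSeries.coeff_X_pow_mul,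
    invOneSubPow_val_eq_mk_sub_one_add_choose_of_pos ℚ ((r + 2) * k) (by positivity), coeff_mk]
  norm_cast
  set s := (r + 2) * k with hs
  set t := (r + 1) * k with ht
  have hst : s = t + k := by rw [hs, ht]; ring
  have h1 := Nat.choose_symm (n := s - 1 + d) (k := s - 1) (by omega)
  rw [show s - 1 + d - (s - 1) = d from by omega] at h1
  rw [show d + k + t - 1 = s - 1 + d from by omega, show d + k - k = d from by omega, ← h1]

/-- For `f₀ j = C(j+r, r+1)` and `m ≥ 1`:
`(𝒴^m f₀)(n) = ∑_{k=1}^{n} C(n+(r+1)k-1, n-k) m^(k-1)`,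
which for `n > 1` counts words of length `n-1` over `{0,…,m+r+1}` avoiding every
pattern `a₁a₂` with `a₁ < a₂`, `a₁, a₂ ∈ {0,…,r+1}`. -/
theorem stmt_14 (r m : ℕ) (hm : 1 ≤ m) (f₀ : ℕ → ℚ)
    (hf : ∀ j, 1 ≤ j → f₀ j = ((j + r).choose (r + 1) : ℚ)) (n : ℕ) (hn : 1 ≤ n) :
    (invert^[m] f₀) n
      = ∑ k ∈ Finset.Icc 1 n,
          ((n + (r + 1) * k - 1).choose (n - k) : ℚ) * (m : ℚ) ^ (k - 1) := by
  classical
  have hiter : invert^[m] f₀ = invert^[m] (fseq r) := by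
    obtain ⟨m', rfl⟩ : ∃ m', m = m' + 1 := ⟨m - 1, by omega⟩
    rw [Function.iterate_succ_apply, Function.iterate_succ_apply]
    congr 1
    refine invert_congr fun j hj => ?_
    rw [hf j hj]
    simp only [fseq]
    rw [if_neg (by omega : ¬ j = 0)]
  rw [hiter]
  set R := PowerSeries ℚ
  set F := Fps r with hF
  set G := PowerSeries.mk (invert^[m] (fseq r)) with hGdef
  have hG : G * (1 - (m : R) * F) = F := key r m
  set P : R := F * ∑ i ∈ Finset.range n, ((m : R) * F) ^ i with hPdef
  have hP : P * (1 - (m : R) * F) = F - ((m : R) * F) ^ n * F := by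
    rw [hPdef]
    linear_combination (-(F : R)) * geom_sum_mul ((m : R) * F) n
  have hu : PowerSeries.constantCoeff (1 - (m : R) * F) ≠ 0 := by
    simp [hF, Fps]
  have hc : (1 - (m : R) * F) * (1 - (m : R) * F)⁻¹ = 1 :=
    PowerSeries.mul_inv_cancel _ hu
  have hsplit : G = P + ((m : R) * F) ^ n * F * (1 - (m : R) * F)⁻¹ := by
    have h3 : (G - P) * (1 - (m : R) * F) = ((m : R) * F) ^ n * F := by
      linear_combination hG - hP
    have h4 : G - P = ((m : R) * F) ^ n * F * (1 - (m : R) * F)⁻¹ := by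
      calc G - P = (G - P) * ((1 - (m : R) * F) * (1 - (m : R) * F)⁻¹) := by rw [hc, mul_one]
        _ = ((G - P) * (1 - (m : R) * F)) * (1 - (m : R) * F)⁻¹ := by ring
        _ = ((m : R) * F) ^ n * F * (1 - (m : R) * F)⁻¹ := by rw [h3]
    linear_combination h4
  have hxdvd : (PowerSeries.X : R) ^ (n + 1) ∣ F ^ (n + 1) :=
    ⟨_, Fpow r (n + 1)⟩
  have htail : PowerSeries.coeff n (((m : R) * F) ^ n * F * (1 - (m : R) * F)⁻¹) = 0 := by
    have hd2 : (PowerSeries.X : R) ^ (n + 1)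
        ∣ ((m : R) * F) ^ n * F * (1 - (m : R) * F)⁻¹ := by
      have he : ((m : R) * F) ^ n * F * (1 - (m : R) * F)⁻¹
          = ((m : R) ^ n * (1 - (m : R) * F)⁻¹) * F ^ (n + 1) := by ring
      rw [he]
      exact Dvd.dvd.mul_left hxdvd _
    exact PowerSeries.X_pow_dvd_iff.mp hd2 n (by omega)
  have hcoeff := congrArg (PowerSeries.coeff n) hsplit
  rw [map_add, htail, add_zero, hGdef, coeff_mk] at hcoeff
  rw [hcoeff, hPdef]
  have hPsum : F * ∑ i ∈ Finset.range n, ((m : R) * F) ^ i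
      = ∑ i ∈ Finset.range n, PowerSeries.C ((m : ℚ) ^ i) * F ^ (i + 1) := by
    rw [Finset.mul_sum]
    refine Finset.sum_congr rfl fun i _ => ?_
    rw [show ((m : R)) = PowerSeries.C (m : ℚ) from (map_natCast (PowerSeries.C (R := ℚ)) m).symm,
      mul_pow, ← map_pow]
    ring
  rw [hPsum, map_sum]
  have hterm : ∀ i ∈ Finset.range n,
      PowerSeries.coeff n (PowerSeries.C ((m : ℚ) ^ i) * F ^ (i + 1))
        = ((n + (r + 1) * (i + 1) - 1).choose (n - (i + 1)) : ℚ) * (m : ℚ) ^ i := by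
    intro i hi
    have hi' := Finset.mem_range.mp hi
    rw [PowerSeries.coeff_C_mul, coeff_Fpow r (i + 1) n (by omega) (by omega)]
    ring
  rw [Finset.sum_congr rfl hterm]
  rw [show Finset.Icc 1 n = Finset.Ico 1 (n + 1) from by rw [Finset.Ico_add_one_right_eq_Icc],
    Finset.sum_Ico_eq_sum_range]
  refine Finset.sum_congr (by norm_num) fun i hi => ?_
  rw [show 1 + i = i + 1 from by omega]
  rw [show i + 1 - 1 = i from by omega]
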